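/- arXiv:2012.04942 — 2 statements merged into one kernel-verified Lean document; each statement's English description precedes it below -/
import Mathlib

section
/- Let {f_t : t ∈ T} ⊂ Γ₀(X) be a nonempty family, f := sup_{t∈T} f_t, x ∈ dom f, and ε > 0. Set T_ε⁺(x) := T_ε(x) ∪ {t ∈ T : f_t(x) ≥ 0}. Under the standard hypothesis (SH) one has N_{dom f}(x) = [ co‾( (⋃_{t∈T_ε⁺(x)} ∂_ε f_t(x)) ∪ (⋃_{t∈T\T_ε⁺(x), 0≤λ≤1} ∂_{ε+λ f_t(x)}(λ f_t)(x)) ) ]_∞, where (λ f_t)(z) := λ f_t(z) and 0·f_t is the indicator function I_{dom f_t} (value 0 on dom f_t, +∞ outside). -/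
open Set Pointwise Topology
open scoped Classical

noncomputable section

variable {X : Type*} [AddCommGroup X] [Module ℝ X] [TopologicalSpace X]
  [IsTopologicalAddGroup X] [ContinuousSMul ℝ X] [LocallyConvexSpace ℝ X] [T2Space X]

/-- Convexity for extended-real-valued functions. -/
def EConvexOn' (f : X → EReal) : Prop :=
  ∀ x y : X, ∀ a b : ℝ, 0 ≤ a → 0 ≤ b → a + b = 1 →
    f (a • x + b • y) ≤ (a : EReal) * f x + (b : EReal) * f y

/-- `f ∈ Γ₀(X)`: proper, convex and lower semicontinuous. -/
def Gamma0 (f : X → EReal) : Prop :=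
  (∀ x, f x ≠ ⊥) ∧ (∃ x, f x ≠ ⊤) ∧ EConvexOn' f ∧ LowerSemicontinuous f

/-- Effective domain of `f`. -/
def edom (f : X → EReal) : Set X := {x | f x ≠ ⊤}

/-- The ε-subdifferential of `f` at `x` (a subset of the weak* dual);
it is empty when `ε < 0` or `f x ∉ ℝ`. -/
def esubdiff (f : X → EReal) (x : X) (ε : ℝ) : Set (WeakDual ℝ X) :=
  {p | 0 ≤ ε ∧ f x ≠ ⊤ ∧ f x ≠ ⊥ ∧
    ∀ y : X, f x + ((p y - p x - ε : ℝ) : EReal) ≤ f y}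

/-- Normal cone to `A` at `x` (empty when `x ∉ A`). -/
def normalCone (A : Set X) (x : X) : Set (WeakDual ℝ X) :=
  {p | x ∈ A ∧ ∀ y ∈ A, p y - p x ≤ 0}

/-- Recession cone of a set. -/
def recCone {V : Type*} [AddCommMonoid V] [Module ℝ V] (C : Set V) : Set V :=
  {y | ∃ c ∈ C, ∀ l : ℝ, 0 ≤ l → c + l • y ∈ C}

/-- Closed convex hull of a set. -/
def cclo {V : Type*} [AddCommMonoid V] [Module ℝ V] [TopologicalSpace V] (S : Set V) : Set V :=
  closure (convexHull ℝ S)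

/-- `sMul l f` is the function `l·f`, with the convention `0·f = I_{dom f}`
(i.e. `(l·f) z = +∞` whenever `f z = +∞`). -/
def sMul (l : ℝ) (f : X → EReal) : X → EReal :=
  fun z => if f z = ⊤ then ⊤ else (l : EReal) * f z


set_option linter.unusedSectionVars false

-- epigraph is closed
lemma epi_closed {g : X → EReal} (hlsc : LowerSemicontinuous g) :
    IsClosed {v : X × ℝ | g v.1 ≤ (v.2 : EReal)} := by
  rw [← isOpen_compl_iff, isOpen_iff_mem_nhds]
  rintro ⟨z, w⟩ hv
  simp only [mem_compl_iff, mem_setOf_eq, not_le] at hv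
  -- find a real c with w < c and (c : EReal) < g z
  obtain ⟨c, hc1, hc2⟩ : ∃ c : ℝ, w < c ∧ (c : EReal) < g z := by
    rcases eq_or_ne (g z) ⊤ with h | h
    · exact ⟨w + 1, by linarith, by rw [h]; exact lt_of_le_of_ne le_top (EReal.coe_ne_top _)⟩
    · have hb : g z ≠ ⊥ := fun hb => by simp [hb] at hv
      obtain ⟨R, hR⟩ : ∃ R : ℝ, g z = (R : EReal) := ⟨(g z).toReal, (EReal.coe_toReal h hb).symm⟩
      rw [hR] at hv ⊢
      have hw : w < R := by exact_mod_cast hv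
      exact ⟨(w + R) / 2, by linarith, EReal.coe_lt_coe_iff.mpr (by linarith)⟩
  have h1 : {z' : X | (c : EReal) < g z'} ∈ 𝓝 z := hlsc z _ hc2
  rw [nhds_prod_eq]
  refine Filter.mem_of_superset (Filter.prod_mem_prod h1 (Iio_mem_nhds hc1)) ?_
  rintro ⟨z', w'⟩ ⟨hz', hw'⟩
  simp only [mem_compl_iff, mem_setOf_eq, not_le]
  exact lt_trans (by exact_mod_cast hw') hz'

-- epigraph is convex
lemma epi_convex {g : X → EReal} (hconv : EConvexOn' g) :
    Convex ℝ {v : X × ℝ | g v.1 ≤ (v.2 : EReal)} := by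
  rintro ⟨y1, r1⟩ h1 ⟨y2, r2⟩ h2 a b ha hb hab
  simp only [mem_setOf_eq] at h1 h2 ⊢
  calc g (a • y1 + b • y2) ≤ (a : EReal) * g y1 + (b : EReal) * g y2 :=
        hconv y1 y2 a b ha hb hab
    _ ≤ (a : EReal) * (r1 : EReal) + (b : EReal) * (r2 : EReal) := by
        gcongr
    _ = (((a * r1 + b * r2 : ℝ)) : EReal) := by
        rw [EReal.coe_add, EReal.coe_mul, EReal.coe_mul]
    _ = (((a • (y1, r1) + b • (y2, r2) : X × ℝ).2 : ℝ) : EReal) := by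
        norm_num

lemma exists_real {a : EReal} (h1 : a ≠ ⊤) (h2 : a ≠ ⊥) : ∃ r : ℝ, a = (r : EReal) :=
  ⟨a.toReal, (EReal.coe_toReal h1 h2).symm⟩

/-- Propagation: convex on the ray, value ≤ r at 0 with r ≤ c, value ≥ c at σ, then ≥ c at s ≥ σ. -/
lemma prop1 {g : X → EReal} (hbot : ∀ z, g z ≠ ⊥) (hconv : EConvexOn' g)
    (x xb : X) {r c : ℝ} (hgx : g x ≤ (r : EReal)) (hrc : r ≤ c)
    {σ s : ℝ} (hσ : 0 < σ) (hσs : σ ≤ s)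
    (hc : (c : EReal) ≤ g (x + σ • xb)) : (c : EReal) ≤ g (x + s • xb) := by
  have hs : 0 < s := lt_of_lt_of_le hσ hσs
  rcases eq_or_ne (g (x + s • xb)) ⊤ with h | h
  · rw [h]; exact le_top
  set a : ℝ := 1 - σ / s with ha_def
  set b : ℝ := σ / s with hb_def
  have hb0 : 0 < b := div_pos hσ hs
  have hb1 : b ≤ 1 := by rw [hb_def, div_le_one hs]; exact hσs
  have ha0 : 0 ≤ a := by rw [ha_def]; linarith
  have hab : a + b = 1 := by ring
  have hpoint : a • x + b • (x + s • xb) = x + σ • xb := by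
    have : b * s = σ := by rw [hb_def]; field_simp
    rw [smul_add, ← add_assoc, ← add_smul, hab, one_smul, smul_smul, this]
  have hkey := hconv x (x + s • xb) a b ha0 (le_of_lt hb0) hab
  rw [hpoint] at hkey
  -- get real representations
  obtain ⟨u, hu⟩ := exists_real (ne_top_of_le_ne_top (EReal.coe_ne_top r) hgx) (hbot x)
  obtain ⟨w, hw⟩ := exists_real h (hbot _)
  have hu_r : u ≤ r := by rw [hu] at hgx; exact_mod_cast hgx
  have hmid : g (x + σ • xb) ≤ ((a * u + b * w : ℝ) : EReal) := by
    calc g (x + σ • xb) ≤ (a : EReal) * g x + (b : EReal) * g (x + s • xb) := hkey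
      _ ≤ (a : EReal) * (u : EReal) + (b : EReal) * (w : EReal) := by
          rw [hu, hw]
      _ = ((a * u + b * w : ℝ) : EReal) := by
          rw [EReal.coe_add, EReal.coe_mul, EReal.coe_mul]
  have hcm : c ≤ a * u + b * w := by
    exact_mod_cast le_trans hc hmid
  have hcw : c ≤ w := by
    by_contra hcon
    push_neg at hcon
    have hau : a * u ≤ a * c := by nlinarith
    have hsum : a * c + b * c = c := by rw [← add_mul, hab, one_mul]
    linarith [mul_lt_mul_of_pos_left hcon hb0]
  rw [hw]
  exact_mod_cast hcw


lemma smul_nebot {g : X → EReal} (hbot : ∀ z, g z ≠ ⊥) (l : ℝ) :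
    ∀ z, sMul l g z ≠ ⊥ := by
  intro z
  rcases eq_or_ne (g z) ⊤ with h | h
  · simp [sMul, h]
  · obtain ⟨w, hw⟩ := exists_real h (hbot z)
    simp [sMul, h, hw, ← EReal.coe_mul]


/-- `sMul l g` is convex when `0 ≤ l` and `g` is proper convex. -/
lemma smul_convex {g : X → EReal} (hbot : ∀ z, g z ≠ ⊥) (hconv : EConvexOn' g)
    {l : ℝ} (hl : 0 ≤ l) : EConvexOn' (sMul l g) := by
  intro y z a b ha hb hab
  have hsbot : ∀ w, sMul l g w ≠ ⊥ := by
    intro w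
    rcases eq_or_ne (g w) ⊤ with h | h
    · simp [sMul, h]
    · obtain ⟨u, hu⟩ := exists_real h (hbot w)
      simp [sMul, h, hu, ← EReal.coe_mul]
  -- cases where one of the functions is ⊤ with positive weight
  rcases eq_or_ne a 0 with ha0 | ha0
  · have hb1 : b = 1 := by linarith
    subst ha0; subst hb1
    simp only [EReal.coe_zero, EReal.coe_one, zero_smul, zero_add, one_smul, one_mul]
    rw [zero_mul, zero_add]
  rcases eq_or_ne b 0 with hb0 | hb0
  · have ha1 : a = 1 := by linarith
    subst hb0; subst ha1
    simp only [EReal.coe_zero, EReal.coe_one, zero_smul, add_zero, one_smul, one_mul]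
    rw [zero_mul, add_zero]
  have ha' : 0 < a := lt_of_le_of_ne ha (Ne.symm ha0)
  have hb' : 0 < b := lt_of_le_of_ne hb (Ne.symm hb0)
  rcases eq_or_ne (g y) ⊤ with hgy | hgy
  · have h1 : sMul l g y = ⊤ := by simp [sMul, hgy]
    rw [h1, EReal.mul_top_of_pos (by exact_mod_cast ha' : (0:EReal) < (a:EReal)),
      EReal.top_add_of_ne_bot]
    · exact le_top
    · intro hcon
      rcases eq_or_ne b 0 with h' | h'
      · exact hb0 h'
      · have := hsbot z
        rcases eq_or_ne (sMul l g z) ⊤ with h2 | h2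
        · rw [h2, EReal.mul_top_of_pos (by exact_mod_cast hb')] at hcon
          exact (top_ne_bot) hcon
        · obtain ⟨u, hu⟩ := exists_real h2 this
          rw [hu, ← EReal.coe_mul] at hcon
          exact (EReal.coe_ne_bot _) hcon
  rcases eq_or_ne (g z) ⊤ with hgz | hgz
  · have h1 : sMul l g z = ⊤ := by simp [sMul, hgz]
    rw [h1, EReal.mul_top_of_pos (by exact_mod_cast hb' : (0:EReal) < (b:EReal)),
      EReal.add_top_of_ne_bot]
    · exact le_top
    · have := hsbot y
      rcases eq_or_ne (sMul l g y) ⊤ with h2 | h2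
      · rw [h2, EReal.mul_top_of_pos (by exact_mod_cast ha')]
        exact top_ne_bot
      · obtain ⟨u, hu⟩ := exists_real h2 this
        rw [hu, ← EReal.coe_mul]
        exact EReal.coe_ne_bot _
  -- main case : g y, g z real
  obtain ⟨u1, hu1⟩ := exists_real hgy (hbot y)
  obtain ⟨u2, hu2⟩ := exists_real hgz (hbot z)
  have hmix : g (a • y + b • z) ≠ ⊤ := by
    intro hcon
    have := hconv y z a b ha hb hab
    rw [hcon, hu1, hu2, ← EReal.coe_mul, ← EReal.coe_mul, ← EReal.coe_add] at this
    exact (not_le.mpr (lt_of_le_of_ne le_top (EReal.coe_ne_top _))) this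
  obtain ⟨u3, hu3⟩ := exists_real hmix (hbot _)
  have hreal : u3 ≤ a * u1 + b * u2 := by
    have := hconv y z a b ha hb hab
    rw [hu1, hu2, hu3, ← EReal.coe_mul, ← EReal.coe_mul, ← EReal.coe_add] at this
    exact_mod_cast this
  have e1 : sMul l g (a • y + b • z) = ((l * u3 : ℝ) : EReal) := by
    simp [sMul, hmix, hu3, ← EReal.coe_mul]
  have e2 : sMul l g y = ((l * u1 : ℝ) : EReal) := by
    simp [sMul, hgy, hu1, ← EReal.coe_mul]
  have e3 : sMul l g z = ((l * u2 : ℝ) : EReal) := by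
    simp [sMul, hgz, hu2, ← EReal.coe_mul]
  rw [e1, e2, e3, ← EReal.coe_mul, ← EReal.coe_mul, ← EReal.coe_add]
  have : l * u3 ≤ a * (l * u1) + b * (l * u2) := by nlinarith
  exact_mod_cast this

/-- `sMul l g` is lower semicontinuous when `l > 0`. -/
lemma smul_lsc {g : X → EReal} (hbot : ∀ z, g z ≠ ⊥) (hlsc : LowerSemicontinuous g)
    {l : ℝ} (hl : 0 < l) : LowerSemicontinuous (sMul l g) := by
  have heq : sMul l g = fun z => (l : EReal) * g z := by
    funext z
    rcases eq_or_ne (g z) ⊤ with h | h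
    · simp [sMul, h, EReal.coe_mul_top_of_pos hl]
    · simp [sMul, h]
  rw [heq]
  intro x y hy
  dsimp only at hy
  -- find m : ℝ with y < l * m and (m : EReal) < g x
  obtain ⟨m, hm1, hm2⟩ : ∃ m : ℝ, y < ((l * m : ℝ) : EReal) ∧ (m : EReal) < g x := by
    rcases eq_or_ne (g x) ⊤ with h | h
    · rcases eq_or_ne y ⊥ with hy' | hy'
      · exact ⟨0, by rw [hy']; exact bot_lt_iff_ne_bot.mpr (EReal.coe_ne_bot _),
          by rw [h]; exact lt_of_le_of_ne le_top (EReal.coe_ne_top _)⟩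
      · have hytop : y ≠ ⊤ := by
          intro hcon; rw [hcon, h, EReal.coe_mul_top_of_pos hl] at hy; exact lt_irrefl _ hy
        obtain ⟨y0, hy0⟩ := exists_real hytop hy'
        refine ⟨y0 / l + 1, ?_, by rw [h]; exact lt_of_le_of_ne le_top (EReal.coe_ne_top _)⟩
        rw [hy0]
        have hcanc : l * (y0 / l) = y0 := by field_simp
        have : y0 < l * (y0 / l + 1) := by nlinarith
        exact_mod_cast this
    · obtain ⟨u, hu⟩ := exists_real h (hbot x)
      rw [hu] at hy ⊢
      have hy'' : y < ((l * u : ℝ) : EReal) := by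
        rw [EReal.coe_mul]; exact hy
      rcases eq_or_ne y ⊥ with hy' | hy'
      · exact ⟨u - 1, by rw [hy']; exact bot_lt_iff_ne_bot.mpr (EReal.coe_ne_bot _),
          EReal.coe_lt_coe_iff.mpr (by linarith)⟩
      · have hytop : y ≠ ⊤ := ne_top_of_lt hy''
        obtain ⟨y0, hy0⟩ := exists_real hytop hy'
        have hlt : y0 < l * u := by rw [hy0] at hy''; exact_mod_cast hy''
        refine ⟨(y0 / l + u) / 2, ?_, EReal.coe_lt_coe_iff.mpr ?_⟩
        · rw [hy0]
          have : y0 < l * ((y0 / l + u) / 2) := by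
            have h1 : y0 / l < u := by rw [div_lt_iff₀ hl]; linarith [mul_comm l u]
            have h2 : y0 / l < (y0 / l + u) / 2 := by linarith
            calc y0 = l * (y0 / l) := by field_simp
              _ < l * ((y0 / l + u) / 2) := by exact mul_lt_mul_of_pos_left h2 hl
          exact_mod_cast this
        · have h1 : y0 / l < u := by rw [div_lt_iff₀ hl]; linarith [mul_comm l u]
          linarith
  filter_upwards [hlsc x _ hm2] with z hz
  calc y < ((l * m : ℝ) : EReal) := hm1
    _ = (l : EReal) * (m : EReal) := EReal.coe_mul l m
    _ ≤ (l : EReal) * g z := by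
        apply mul_le_mul_of_nonneg_left (le_of_lt hz)
        exact_mod_cast le_of_lt hl

private lemma arith1 {A w σ γ' δ α gx : ℝ}
    (h2 : A + σ * (-α * w) + (gx - δ + σ * γ') * α < A + gx * α) :
    (σ * γ' - δ) * α < (σ * w) * α := by nlinarith

private lemma arith2 {F1 F2 r gx δ α : ℝ} (h2 : F1 + (gx - δ) * α < F2 + r * α) :
    F1 - F2 < (r - gx + δ) * α := by nlinarith

private lemma arith3 {σ γ γ' δ w : ℝ} (h5 : σ * γ' - δ < σ * w) (hδσ : δ < (γ' - γ) * σ) :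
    σ * γ < σ * w := by nlinarith


/-- KEY1: separation-based existence of approximate subgradients with controlled value. -/
lemma key1 {g : X → EReal} (hbot : ∀ z, g z ≠ ⊥) (hconv : EConvexOn' g)
    (hlsc : LowerSemicontinuous g) {x : X} (hgx : g x ≠ ⊤) {δ : ℝ} (hδ : 0 < δ)
    (xb : X) {γ γ₁ : ℝ} (hγ : γ < γ₁)
    (H : ∀ s : ℝ, 0 < s → g x + ((s * γ₁ - δ : ℝ) : EReal) ≤ g (x + s • xb)) :
    ∃ q : WeakDual ℝ X, q ∈ esubdiff g x δ ∧ γ < q xb := by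
  obtain ⟨gx, hgx'⟩ := exists_real hgx (hbot x)
  set γ' : ℝ := (γ + γ₁) / 2 with hγ'_def
  have hγ'1 : γ < γ' := by rw [hγ'_def]; linarith
  have hγ'2 : γ' < γ₁ := by rw [hγ'_def]; linarith
  set σ : ℝ := δ / (γ' - γ) + 1 with hσ_def
  have hgg : 0 < γ' - γ := by linarith
  have hσ0 : 0 < σ := by
    rw [hσ_def]; have := div_pos hδ hgg; linarith
  have hδσ : δ < (γ' - γ) * σ := by
    rw [hσ_def, mul_add, mul_one, mul_div_cancel₀ _ (ne_of_gt hgg)]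
    linarith
  -- the segment
  set P₀ : X × ℝ := (x, gx - δ) with hP₀
  set P₁ : X × ℝ := (x + σ • xb, gx - δ + σ * γ') with hP₁
  set A : Set (X × ℝ) := segment ℝ P₀ P₁ with hA
  have hAconv : Convex ℝ A := convex_segment _ _
  have hAcomp : IsCompact A := by
    rw [hA, segment_eq_image]
    exact isCompact_Icc.image
      (((continuous_const.sub continuous_id).smul continuous_const).add
        (continuous_id.smul continuous_const))
  set epi : Set (X × ℝ) := {v : X × ℝ | g v.1 ≤ (v.2 : EReal)} with hepi_def
  have hepi_closed : IsClosed epi := epi_closed hlsc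
  have hepi_conv : Convex ℝ epi := epi_convex hconv
  have hdisj : Disjoint A epi := by
    rw [Set.disjoint_left]
    intro a haA haepi
    rw [hA, segment_eq_image] at haA
    obtain ⟨θ, hθ, rfl⟩ := haA
    have hθ0 : 0 ≤ θ := hθ.1
    set s : ℝ := θ * σ with hs_def
    have hcomp1 : ((1 - θ) • P₀ + θ • P₁).1 = x + s • xb := by
      rw [hP₀, hP₁]
      show (1 - θ) • x + θ • (x + σ • xb) = x + s • xb
      rw [smul_add, ← add_assoc, ← add_smul, sub_add_cancel, one_smul, smul_smul]
    have hcomp2 : ((1 - θ) • P₀ + θ • P₁).2 = gx - δ + s * γ' := by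
      rw [hP₀, hP₁]
      show (1 - θ) * (gx - δ) + θ * (gx - δ + σ * γ') = gx - δ + s * γ'
      rw [hs_def]; ring
    rw [hepi_def, mem_setOf_eq, hcomp1, hcomp2] at haepi
    rcases eq_or_lt_of_le hθ0 with hθ0' | hθ0'
    · -- θ = 0 : contradiction with δ > 0
      rw [hs_def, ← hθ0', zero_mul, zero_smul, add_zero, zero_mul, add_zero, hgx'] at haepi
      have : gx ≤ gx - δ := by exact_mod_cast haepi
      linarith
    · -- θ > 0 : contradiction with H
      have hs0 : 0 < s := by rw [hs_def]; exact mul_pos hθ0' hσ0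
      have hH := H s hs0
      rw [hgx', ← EReal.coe_add] at hH
      have hchain : ((gx + (s * γ₁ - δ) : ℝ) : EReal) ≤ ((gx - δ + s * γ' : ℝ) : EReal) :=
        le_trans hH haepi
      have : gx + (s * γ₁ - δ) ≤ gx - δ + s * γ' := by exact_mod_cast hchain
      nlinarith
  obtain ⟨F, u, v, hFA, huv, hFepi⟩ :=
    geometric_hahn_banach_compact_closed hAconv hAcomp hepi_conv hepi_closed hdisj
  set α : ℝ := F (0, 1) with hα_def
  have hFsplit : ∀ (y : X) (r : ℝ), F (y, r) = F (y, 0) + r * α := by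
    intro y r
    have hyr : (y, r) = (y, (0 : ℝ)) + r • ((0 : X), (1 : ℝ)) := by
      simp [Prod.ext_iff]
    rw [hyr, map_add, map_smul, smul_eq_mul, hα_def]
  have hepi' : ∀ (y : X) (r : ℝ), g y ≤ (r : EReal) → v < F (y, 0) + r * α := by
    intro y r hyr
    have := hFepi (y, r) hyr
    rwa [hFsplit] at this
  have hA0 : F (x, 0) + (gx - δ) * α < u := by
    have := hFA P₀ (left_mem_segment ℝ P₀ P₁)
    rwa [hP₀, hFsplit] at this
  have hA1 : F (x + σ • xb, 0) + (gx - δ + σ * γ') * α < u := by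
    have := hFA P₁ (right_mem_segment ℝ P₀ P₁)
    rwa [hP₁, hFsplit] at this
  -- α is positive
  have hα : 0 < α := by
    rcases lt_trichotomy α 0 with hneg | hzero | hpos
    · obtain ⟨n, hn⟩ := exists_nat_gt ((v - F (x, 0) - gx * α) / α)
      have hn' : (n : ℝ) * α < v - F (x, 0) - gx * α := by
        rw [div_lt_iff_of_neg hneg] at hn
        exact hn
      have hle : g x ≤ ((gx + n : ℝ) : EReal) := by
        rw [hgx']
        exact_mod_cast (by simp : gx ≤ gx + (n:ℝ))
      exfalso
      have h1 := hepi' x (gx + n) hle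
      rw [add_mul] at h1
      linarith
    · exfalso
      have h1 := hepi' x gx (le_of_eq hgx')
      rw [hzero] at h1 hA0
      simp only [mul_zero, add_zero] at h1 hA0
      linarith
    · exact hpos
  -- the candidate subgradient
  set q₀ : X →L[ℝ] ℝ := F.comp (ContinuousLinearMap.inl ℝ X ℝ) with hq₀_def
  have hq₀app : ∀ y : X, q₀ y = F (y, 0) := fun y => rfl
  set q : WeakDual ℝ X := (show X →L[ℝ] ℝ from -(α⁻¹) • q₀) with hq_def
  have hqapp : ∀ y : X, q y = -(α⁻¹) * F (y, 0) := fun y => rfl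
  clear_value q
  have hq₀lin : ∀ (s : ℝ), F (x + s • xb, 0) = F (x, 0) + s * F (xb, 0) := by
    intro s
    have : ((x + s • xb, (0:ℝ)) : X × ℝ) = (x, (0:ℝ)) + s • (xb, (0:ℝ)) := by
      simp [Prod.ext_iff]
    rw [this, map_add, map_smul, smul_eq_mul]
  have hαne : α ≠ 0 := ne_of_gt hα
  refine ⟨q, ⟨le_of_lt hδ, hgx, hbot x, ?_⟩, ?_⟩
  · -- ε-subdifferential inequality
    intro y
    rcases eq_or_ne (g y) ⊤ with hy | hy
    · rw [hy]; exact le_top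
    obtain ⟨r, hr⟩ := exists_real hy (hbot y)
    obtain ⟨yv, hyv⟩ : ∃ w : ℝ, q y = w := ⟨_, rfl⟩
    obtain ⟨xv, hxv⟩ : ∃ w : ℝ, q x = w := ⟨_, rfl⟩
    have hyv' : yv = -(α⁻¹) * F (y, 0) := by rw [← hyv, hqapp y]
    have hxv' : xv = -(α⁻¹) * F (x, 0) := by rw [← hxv, hqapp x]
    have h1 := hepi' y r (le_of_eq hr)
    have h2 : F (x, 0) + (gx - δ) * α < F (y, 0) + r * α := by linarith
    have h3 : F (x, 0) - F (y, 0) < (r - gx + δ) * α := arith2 h2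
    have h4 : (F (x, 0) - F (y, 0)) / α < r - gx + δ := (div_lt_iff₀ hα).mpr h3
    have hqyx : yv - xv = (F (x, 0) - F (y, 0)) / α := by
      rw [hyv', hxv']; field_simp; ring
    rw [hgx', hr, hyv, hxv, ← EReal.coe_add, EReal.coe_le_coe_iff]
    rw [hqyx]
    linarith
  · -- value at xb is large
    obtain ⟨w, hw⟩ : ∃ w : ℝ, q xb = w := ⟨_, rfl⟩
    have hw' : w = -(α⁻¹) * F (xb, 0) := by rw [← hw, hqapp xb]
    have hFxb : F (xb, 0) = -α * w := by
      rw [hw']; field_simp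
    have h1 := hepi' x gx (le_of_eq hgx')
    have h2 : F (x + σ • xb, 0) + (gx - δ + σ * γ') * α < F (x, 0) + gx * α := by
      linarith
    rw [hq₀lin σ, hFxb] at h2
    have h7 : (σ * γ' - δ) * α < (σ * w) * α := arith1 h2
    have h5 : σ * γ' - δ < σ * w := (mul_lt_mul_iff_left₀ hα).mp h7
    have h8 : σ * γ < σ * w := arith3 h5 hδσ
    rw [hw]
    exact (mul_lt_mul_iff_right₀ hσ0).mp h8

/-- Separation of a point from a closed convex hull in the weak-* dual,
by an evaluation functional. -/
lemma sep {C : Set (WeakDual ℝ X)} {p' : WeakDual ℝ X}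
    (hp' : p' ∉ closure (convexHull ℝ C)) :
    ∃ (xb : X) (u : ℝ), (∀ q ∈ convexHull ℝ C, q xb ≤ u) ∧ u < p' xb := by
  classical
  set Φ : WeakDual ℝ X → (X → ℝ) := fun q y => q y with hΦ_def
  have hInd : IsInducing Φ := ⟨rfl⟩
  set D : Set (X → ℝ) := Φ '' (convexHull ℝ C) with hD_def
  have hΦp' : Φ p' ∉ closure D := by
    intro hcon
    exact hp' (by rw [hInd.closure_eq_preimage_closure_image]; exact hcon)
  -- find a finite set of coordinates witnessing the separation
  have hop : (closure D)ᶜ ∈ 𝓝 (Φ p') := isClosed_closure.isOpen_compl.mem_nhds hΦp'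
  rw [nhds_pi, Filter.mem_pi] at hop
  obtain ⟨I, hIfin, t, htmem, htsub⟩ := hop
  choose V hVsub hVopen hVmem using fun i => mem_nhds_iff.mp (htmem i)
  haveI : Fintype ↑I := hIfin.fintype
  -- the projection to finitely many coordinates
  set L : WeakDual ℝ X →ₗ[ℝ] (↑I → ℝ) :=
    { toFun := fun q i => q i.1
      map_add' := fun q q' => funext fun i => rfl
      map_smul' := fun c q => funext fun i => rfl } with hL_def
  have hLapp : ∀ (q : WeakDual ℝ X) (i : ↑I), L q i = q i.1 := fun q i => rfl
  set D' : Set (↑I → ℝ) := L '' (convexHull ℝ C) with hD'_def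
  have hD'conv : Convex ℝ (closure D') :=
    ((convex_convexHull ℝ C).linear_image L).closure
  have hnotin : L p' ∉ closure D' := by
    intro hmem
    obtain ⟨z, hzV, hzD'⟩ := mem_closure_iff.mp hmem (Set.pi univ fun i : ↑I => V i.1)
      (isOpen_set_pi finite_univ fun i _ => hVopen i.1)
      (fun i _ => hVmem i.1)
    obtain ⟨q, hq, rfl⟩ := hzD'
    have hqin : Φ q ∈ I.pi t := by
      intro i hi
      exact hVsub i ((by exact hzV ⟨i, hi⟩ (mem_univ _)) : Φ q i ∈ V i)
    exact (htsub hqin) (subset_closure ⟨q, hq, rfl⟩)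
  obtain ⟨G, u, hG1, hG2⟩ :=
    geometric_hahn_banach_closed_point (E := ↑I → ℝ) hD'conv isClosed_closure hnotin
  set e : ↑I → (↑I → ℝ) := fun i j => if i = j then 1 else 0 with he_def
  set xb : X := ∑ i : ↑I, (G (e i)) • (i.1 : X) with hxb_def
  have hkey : ∀ q : WeakDual ℝ X, q xb = G (L q) := by
    intro q
    have h1 : q xb = ∑ i : ↑I, (G (e i)) * q i.1 := by
      rw [hxb_def, map_sum]
      congr 1
      funext i
      rw [map_smul, smul_eq_mul]
    have h2 : G (L q) = ∑ i : ↑I, (L q i) • G (e i) := by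
      conv_lhs => rw [pi_eq_sum_univ (L q), map_sum]
      congr 1
      funext i
      rw [map_smul]
    rw [h1, h2]
    congr 1
    funext i
    rw [hLapp, smul_eq_mul, mul_comm]
  refine ⟨xb, u, ?_, ?_⟩
  · intro q hq
    rw [hkey q]
    exact le_of_lt (hG1 (L q) (subset_closure ⟨q, hq, rfl⟩))
  · rw [hkey p']
    exact hG2

/-- CORE: if the supremum is `⊤` along the whole open ray `x + (0,∞) • xb`, then for every
bound `u` there is a subgradient in one of the pieces whose value at `xb` exceeds `u`. -/
lemma core_lemma {T : Type*} [TopologicalSpace T] [CompactSpace T] [Nonempty T]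
    (f : T → X → EReal) (hf : ∀ t, Gamma0 (f t))
    (husc : ∀ z : X, UpperSemicontinuous fun t => f t z)
    (x : X) (hx : (⨆ t, f t x) ≠ ⊤) (ε : ℝ) (hε : 0 < ε) (xb : X) (u : ℝ)
    (hray : ∀ s : ℝ, 0 < s → (⨆ t, f t (x + s • xb)) = ⊤) :
    ∃ (t : T) (q : WeakDual ℝ X),
      ((((⨆ s, f s x) - (ε : EReal) ≤ f t x ∨ (0 : EReal) ≤ f t x) ∧
          q ∈ esubdiff (f t) x ε) ∨
        (¬(((⨆ s, f s x) - (ε : EReal) ≤ f t x) ∨ (0 : EReal) ≤ f t x) ∧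
          ∃ l ∈ Icc (0:ℝ) 1, q ∈ esubdiff (sMul l (f t)) x (ε + l * (f t x).toReal))) ∧
      u < q xb := by
  classical
  have hbot : ∀ t z, f t z ≠ ⊥ := fun t => (hf t).1
  have hconv : ∀ t, EConvexOn' (f t) := fun t => (hf t).2.2.1
  have hlsc : ∀ t, LowerSemicontinuous (f t) := fun t => (hf t).2.2.2
  obtain ⟨t₀⟩ := (inferInstance : Nonempty T)
  have hxbot : (⨆ t, f t x) ≠ ⊥ := by
    intro hcon
    exact hbot t₀ x (le_bot_iff.mp (hcon ▸ le_iSup (fun t => f t x) t₀))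
  obtain ⟨F, hF⟩ := exists_real hx hxbot
  have hfx_ne : ∀ t, f t x ≠ ⊤ := by
    intro t hcon
    exact hx (top_le_iff.mp (hcon ▸ le_iSup (fun t => f t x) t))
  have hr : ∀ t, f t x = (((f t x).toReal : ℝ) : EReal) :=
    fun t => (EReal.coe_toReal (hfx_ne t) (hbot t x)).symm
  have hrF : ∀ t, (f t x).toReal ≤ F := by
    intro t
    have := le_iSup (fun t => f t x) t
    rw [hF, hr t] at this
    exact_mod_cast this
  -- the nested family of closed sets
  set D : ℕ → Set T :=
    fun k => {t | ((F + k : ℝ) : EReal) ≤ f t (x + (1 / (k + 1) : ℝ) • xb)} with hD_def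
  have hDcl : ∀ k, IsClosed (D k) := by
    intro k
    have hopen : IsOpen {t | f t (x + (1 / (k + 1) : ℝ) • xb) < ((F + k : ℝ) : EReal)} := by
      rw [isOpen_iff_mem_nhds]
      intro t ht
      exact husc _ t _ ht
    have : D k = {t | f t (x + (1 / (k + 1) : ℝ) • xb) < ((F + k : ℝ) : EReal)}ᶜ := by
      ext t; simp [hD_def, not_lt]
    rw [this]
    exact hopen.isClosed_compl
  have hDne : ∀ k, (D k).Nonempty := by
    intro k
    have hs : (0 : ℝ) < 1 / (k + 1) := by positivity
    have hlt : ((F + k : ℝ) : EReal) < ⨆ t, f t (x + (1 / (k + 1) : ℝ) • xb) := by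
      rw [hray _ hs]
      exact EReal.coe_lt_top _
    obtain ⟨t, ht⟩ := lt_iSup_iff.mp hlt
    exact ⟨t, le_of_lt ht⟩
  have hprop : ∀ (t : T) (c : ℝ), F ≤ c → ∀ σ s : ℝ, 0 < σ → σ ≤ s →
      (c : EReal) ≤ f t (x + σ • xb) → (c : EReal) ≤ f t (x + s • xb) := by
    intro t c hc σ s h1 h2 h3
    exact prop1 (hbot t) (hconv t) x xb (le_of_eq (hr t)) (le_trans (hrF t) hc) h1 h2 h3
  have hDmono : ∀ k, D (k + 1) ⊆ D k := by
    intro k t ht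
    simp only [hD_def, mem_setOf_eq] at ht ⊢
    have hσ : (0 : ℝ) < 1 / ((k : ℝ) + 1 + 1) := by positivity
    have hσs : 1 / ((k : ℝ) + 1 + 1) ≤ 1 / ((k : ℝ) + 1) := by
      apply one_div_le_one_div_of_le (by positivity)
      linarith
    have ht' : ((F + (k + 1) : ℝ) : EReal) ≤ f t (x + (1 / ((k : ℝ) + 1 + 1)) • xb) := by
      convert ht using 3 <;> push_cast <;> ring
    have := hprop t (F + (k + 1)) (by push_cast; linarith) _ _ hσ hσs ht'
    refine le_trans (EReal.coe_le_coe_iff.mpr (by push_cast; linarith)) this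
  obtain ⟨ts, hts⟩ := IsCompact.nonempty_iInter_of_sequence_nonempty_isCompact_isClosed
    D hDmono hDne ((hDcl 0).isCompact) hDcl
  have hts' : ∀ k : ℕ, ((F + k : ℝ) : EReal) ≤ f ts (x + (1 / (k + 1) : ℝ) • xb) :=
    fun k => mem_iInter.mp hts k
  -- the limit index has value ⊤ along the whole open ray
  have htsTop : ∀ s : ℝ, 0 < s → f ts (x + s • xb) = ⊤ := by
    intro s hs
    by_contra hcon
    obtain ⟨w, hw⟩ := exists_real hcon (hbot ts _)
    obtain ⟨k, hk⟩ := exists_nat_gt (max (w - F) (1 / s))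
    have hk1 : (1 : ℝ) / s < k := lt_of_le_of_lt (le_max_right _ _) hk
    have hk2 : w - F < k := lt_of_le_of_lt (le_max_left _ _) hk
    have hks : 1 / ((k : ℝ) + 1) ≤ s := by
      have h1 : (1 : ℝ) < k * s := by
        rw [div_lt_iff₀ hs] at hk1
        linarith
      rw [div_le_iff₀ (by positivity)]
      nlinarith
    have := hprop ts (F + k) (by have : (0:ℝ) ≤ k := Nat.cast_nonneg k; linarith) _ _
      (by positivity : (0:ℝ) < 1 / ((k:ℝ)+1)) hks (by exact_mod_cast hts' k)
    rw [hw] at this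
    have : F + (k : ℝ) ≤ w := by exact_mod_cast this
    linarith
  -- split according to membership in T_ε⁺
  by_cases hcase : ((⨆ s, f s x) - (ε : EReal) ≤ f ts x ∨ (0 : EReal) ≤ f ts x)
  · -- use the ε-subdifferential of f ts
    obtain ⟨q, hq, hqu⟩ := key1 (hbot ts) (hconv ts) (hlsc ts) (hfx_ne ts) hε xb
      (show u < u + 1 by linarith)
      (by
        intro s hs
        rw [htsTop s hs]
        exact le_top)
    exact ⟨ts, q, Or.inl ⟨hcase, hq⟩, hqu⟩
  · -- use a small positive multiple of f ts
    have hneg : f ts x < 0 := by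
      push_neg at hcase
      exact hcase.2
    have hrneg : (f ts x).toReal < 0 := by
      rw [hr ts] at hneg
      exact_mod_cast hneg
    set rs : ℝ := (f ts x).toReal with hrs_def
    have h2r : (0 : ℝ) < -rs := by linarith
    set lam : ℝ := min 1 (ε / (2 * (-rs))) with hlam_def
    have hlam0 : 0 < lam := lt_min one_pos (by positivity)
    have hlam1 : lam ≤ 1 := min_le_left _ _
    have hlamr : lam * (-rs) ≤ ε / 2 := by
      calc lam * (-rs) ≤ (ε / (2 * (-rs))) * (-rs) :=
            mul_le_mul_of_nonneg_right (min_le_right _ _) (le_of_lt h2r)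
        _ = ε / 2 := by
            have hrs0 : rs ≠ 0 := ne_of_lt hrneg
            field_simp
    have hδpos : 0 < ε + lam * rs := by nlinarith
    have hgx_ne : sMul lam (f ts) x ≠ ⊤ := by
      simp only [sMul, hfx_ne ts, if_false]
      rw [hr ts, ← EReal.coe_mul]
      exact EReal.coe_ne_top _
    obtain ⟨q, hq, hqu⟩ := key1 (smul_nebot (hbot ts) lam)
      (smul_convex (hbot ts) (hconv ts) (le_of_lt hlam0))
      (smul_lsc (hbot ts) (hlsc ts) hlam0) hgx_ne hδpos xb
      (show u < u + 1 by linarith)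
      (by
        intro s hs
        have : sMul lam (f ts) (x + s • xb) = ⊤ := by
          simp [sMul, htsTop s hs]
        rw [this]
        exact le_top)
    exact ⟨ts, q, Or.inr ⟨hcase, lam, ⟨le_of_lt hlam0, hlam1⟩, hq⟩, hqu⟩

/-- Corollary `normalnew`, second formula: under (SH), with
`T_ε⁺(x) := T_ε(x) ∪ {t : f_t(x) ≥ 0}`,
`N_{dom f}(x) = [co‾((⋃_{t∈T_ε⁺(x)} ∂_ε f_t(x)) ∪ (⋃_{t∉T_ε⁺(x), 0≤λ≤1} ∂_{ε+λf_t(x)}(λf_t)(x)))]_∞`. -/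
theorem statement13 {T : Type*} [TopologicalSpace T] [CompactSpace T] [T2Space T] [Nonempty T]
    (f : T → X → EReal) (hf : ∀ t, Gamma0 (f t))
    (husc : ∀ z : X, UpperSemicontinuous fun t => f t z)
    (x : X) (hx : x ∈ edom (fun z => ⨆ t, f t z))
    (ε : ℝ) (hε : 0 < ε) :
    normalCone (edom (fun z => ⨆ t, f t z)) x =
      recCone (cclo
        ((⋃ t ∈ {t : T | (⨆ s, f s x) - (ε : EReal) ≤ f t x} ∪ {t : T | (0 : EReal) ≤ f t x},
            esubdiff (f t) x ε) ∪
         (⋃ t ∈ ({t : T | (⨆ s, f s x) - (ε : EReal) ≤ f t x} ∪ {t : T | (0 : EReal) ≤ f t x})ᶜ,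
            ⋃ l ∈ Icc (0 : ℝ) 1,
              esubdiff (sMul l (f t)) x (ε + l * (f t x).toReal)))) := by
  classical
  have hbot : ∀ t z, f t z ≠ ⊥ := fun t => (hf t).1
  have hconv : ∀ t, EConvexOn' (f t) := fun t => (hf t).2.2.1
  have hlsc : ∀ t, LowerSemicontinuous (f t) := fun t => (hf t).2.2.2
  obtain ⟨t₀⟩ := (inferInstance : Nonempty T)
  have hxtop : (⨆ t, f t x) ≠ ⊤ := hx
  have hxbot : (⨆ t, f t x) ≠ ⊥ := by
    intro hcon
    exact hbot t₀ x (le_bot_iff.mp (hcon ▸ le_iSup (fun t => f t x) t₀))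
  obtain ⟨F, hF⟩ := exists_real hxtop hxbot
  have hfx_ne : ∀ t, f t x ≠ ⊤ := by
    intro t hcon
    exact hxtop (top_le_iff.mp (hcon ▸ le_iSup (fun t => f t x) t))
  have hr : ∀ t, f t x = (((f t x).toReal : ℝ) : EReal) :=
    fun t => (EReal.coe_toReal (hfx_ne t) (hbot t x)).symm
  have hrF : ∀ t, (f t x).toReal ≤ F := by
    intro t
    have := le_iSup (fun t => f t x) t
    rw [hF, hr t] at this
    exact_mod_cast this
  set I₁ : Set T :=
    {t : T | (⨆ s, f s x) - (ε : EReal) ≤ f t x} ∪ {t : T | (0 : EReal) ≤ f t x} with hI₁_def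
  set S : Set (WeakDual ℝ X) :=
    (⋃ t ∈ I₁, esubdiff (f t) x ε) ∪
      (⋃ t ∈ I₁ᶜ, ⋃ l ∈ Icc (0 : ℝ) 1,
        esubdiff (sMul l (f t)) x (ε + l * (f t x).toReal)) with hS_def
  -- the uniform bound on S at points of the domain
  have hSbound : ∀ y : X, y ∈ edom (fun z => ⨆ t, f t z) →
      ∀ q ∈ S, q y - q x ≤ max (⨆ t, f t y).toReal 0 + max (ε - F) 0 + ε := by
    intro y hy q hq
    have hytop : (⨆ t, f t y) ≠ ⊤ := hy
    have hybot : (⨆ t, f t y) ≠ ⊥ := by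
      intro hcon
      exact hbot t₀ y (le_bot_iff.mp (hcon ▸ le_iSup (fun t => f t y) t₀))
    obtain ⟨Ry, hRy⟩ := exists_real hytop hybot
    have hRy' : (⨆ t, f t y).toReal = Ry := by rw [hRy]; exact EReal.toReal_coe Ry
    have hfty : ∀ t, f t y ≤ (Ry : EReal) := by
      intro t; rw [← hRy]; exact le_iSup (fun t => f t y) t
    have hfty_ne : ∀ t, f t y ≠ ⊤ := by
      intro t hcon
      have := hfty t
      rw [hcon] at this
      simp at this
    rw [hRy']
    rcases hq with hq | hq
    · -- first union
      obtain ⟨t, htI, hq⟩ := mem_iUnion₂.mp hq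
      obtain ⟨-, -, -, hineq⟩ := hq
      have h1 := hineq y
      obtain ⟨w, hw⟩ := exists_real (hfty_ne t) (hbot t y)
      rw [hr t, hw, ← EReal.coe_add] at h1
      have h1' : (f t x).toReal + (q y - q x - ε) ≤ w := by exact_mod_cast h1
      have hwRy : w ≤ Ry := by
        have := hfty t
        rw [hw] at this
        exact_mod_cast this
      have hrt : -(f t x).toReal ≤ max (ε - F) 0 := by
        rcases htI with h | h
        · rw [mem_setOf_eq, hF, hr t, ← EReal.coe_sub] at h
          have : F - ε ≤ (f t x).toReal := by exact_mod_cast h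
          exact le_trans (by linarith) (le_max_left _ _)
        · rw [mem_setOf_eq, hr t] at h
          have : (0:ℝ) ≤ (f t x).toReal := by exact_mod_cast h
          exact le_trans (by linarith) (le_max_right _ _)
      have : w ≤ max Ry 0 := le_trans hwRy (le_max_left _ _)
      linarith
    · -- second union
      obtain ⟨t, htI, hq⟩ := mem_iUnion₂.mp hq
      obtain ⟨l, hl, hq⟩ := mem_iUnion₂.mp hq
      obtain ⟨-, -, -, hineq⟩ := hq
      have h1 := hineq y
      have hgx_eq : sMul l (f t) x = (((l * (f t x).toReal : ℝ)) : EReal) := by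
        simp only [sMul, hfx_ne t, if_false]
        conv_lhs => rw [hr t]
        rw [← EReal.coe_mul]
      have hgy_eq : sMul l (f t) y = (((l * (f t y).toReal : ℝ)) : EReal) := by
        simp only [sMul, hfty_ne t, if_false]
        conv_lhs => rw [(EReal.coe_toReal (hfty_ne t) (hbot t y)).symm]
        rw [← EReal.coe_mul]
      rw [hgx_eq, hgy_eq, ← EReal.coe_add] at h1
      have h1' : l * (f t x).toReal + (q y - q x - (ε + l * (f t x).toReal))
          ≤ l * (f t y).toReal := by exact_mod_cast h1
      have hwRy : (f t y).toReal ≤ Ry := by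
        have := hfty t
        rw [(EReal.coe_toReal (hfty_ne t) (hbot t y)).symm] at this
        exact_mod_cast this
      have hlw : l * (f t y).toReal ≤ max Ry 0 := by
        rcases le_or_gt 0 ((f t y).toReal) with hw0 | hw0
        · exact le_trans (le_trans (mul_le_of_le_one_left hw0 hl.2) hwRy) (le_max_left _ _)
        · exact le_trans (mul_nonpos_of_nonneg_of_nonpos hl.1 (le_of_lt hw0)) (le_max_right _ _)
      have hmax : (0:ℝ) ≤ max (ε - F) 0 := le_max_right _ _
      linarith
  ext p
  simp only [normalCone, recCone, mem_setOf_eq]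
  constructor
  · -- normal cone ⊆ recession cone
    rintro ⟨hxmem, hpN⟩
    -- a base point in the hull
    have ht₁ : ∃ t₁, ((F - ε : ℝ) : EReal) < f t₁ x := by
      apply lt_iSup_iff.mp
      rw [hF]
      exact_mod_cast (show F - ε < F by linarith)
    obtain ⟨t₁, ht₁⟩ := ht₁
    have ht₁I : t₁ ∈ I₁ := by
      rw [hI₁_def]
      left
      rw [mem_setOf_eq, hF, ← EReal.coe_sub]
      exact le_of_lt ht₁
    obtain ⟨q₀, hq₀, -⟩ := key1 (hbot t₁) (hconv t₁) (hlsc t₁) (hfx_ne t₁) hε (0 : X)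
      (show (-1 : ℝ) < 0 by norm_num)
      (by
        intro s hs
        rw [smul_zero, add_zero, hr t₁, ← EReal.coe_add, EReal.coe_le_coe_iff]
        nlinarith)
    have hq₀S : q₀ ∈ S := by
      rw [hS_def]
      exact mem_union_left _ (mem_biUnion ht₁I hq₀)
    refine ⟨q₀, subset_closure (subset_convexHull ℝ _ hq₀S), ?_⟩
    intro l hl
    by_contra hout
    obtain ⟨xb, u, hu, hlt⟩ := sep (by unfold cclo at hout; exact hout)
    have happly : (q₀ + l • p) xb = q₀ xb + l * p xb := rfl
    rw [happly] at hlt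
    have hq₀u : q₀ xb ≤ u := hu q₀ (subset_convexHull ℝ _ hq₀S)
    rcases le_or_gt (p xb) 0 with hpx | hpx
    · have : l * p xb ≤ 0 := mul_nonpos_of_nonneg_of_nonpos hl hpx
      linarith
    · -- p xb > 0 : the sup is ⊤ along the ray
      have hray : ∀ s : ℝ, 0 < s → (⨆ t, f t (x + s • xb)) = ⊤ := by
        intro s hs
        by_contra hcon
        have hmem : (x + s • xb) ∈ edom (fun z => ⨆ t, f t z) := hcon
        have hple := hpN _ hmem
        have happ : p (x + s • xb) = p x + s * p xb := by
          rw [map_add, map_smul, smul_eq_mul]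
        rw [happ] at hple
        nlinarith
      obtain ⟨t', q, hcase, hqu⟩ := core_lemma f hf husc x hxtop ε hε xb u hray
      have hqS : q ∈ S := by
        rw [hS_def]
        rcases hcase with ⟨hmem, hq⟩ | ⟨hmem, l', hl', hq⟩
        · exact mem_union_left _ (mem_biUnion (by rw [hI₁_def]; exact hmem) hq)
        · refine mem_union_right _ (mem_biUnion (by rw [hI₁_def]; exact hmem) ?_)
          exact mem_biUnion hl' hq
      exact absurd (hu q (subset_convexHull ℝ _ hqS)) (not_le.mpr hqu)
  · -- recession cone ⊆ normal cone
    rintro ⟨c, hc, hrayc⟩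
    refine ⟨hx, ?_⟩
    intro y hy
    set Cy : ℝ := max (⨆ t, f t y).toReal 0 + max (ε - F) 0 + ε with hCy_def
    have hhalf : cclo S ⊆ {q : WeakDual ℝ X | q y - q x ≤ Cy} := by
      apply closure_minimal
      · apply convexHull_min
        · intro q hq
          exact hSbound y hy q hq
        · exact convex_halfSpace_le
            ⟨fun a b => by
                show (a + b) y - (a + b) x = (a y - a x) + (b y - b x)
                have h1 : (a + b) y = a y + b y := rfl
                have h2 : (a + b) x = a x + b x := rfl
                rw [h1, h2]; ring,
              fun cc a => by
                show (cc • a) y - (cc • a) x = cc * (a y - a x)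
                have h1 : (cc • a) y = cc * a y := rfl
                have h2 : (cc • a) x = cc * a x := rfl
                rw [h1, h2]; ring⟩ Cy
      · exact isClosed_le
          ((WeakDual.eval_continuous y).sub (WeakDual.eval_continuous x)) continuous_const
    have hcb : ∀ l : ℝ, 0 ≤ l → (c y - c x) + l * (p y - p x) ≤ Cy := by
      intro l hl
      have hmem := hhalf (hrayc l hl)
      have happly : (c + l • p) y - (c + l • p) x = (c y - c x) + l * (p y - p x) := by
        show (c y + l * p y) - (c x + l * p x) = _
        ring
      rw [mem_setOf_eq, happly] at hmem
      exact hmem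
    by_contra hcon
    push_neg at hcon
    have hd : 0 < p y - p x := hcon
    have h0 := hcb 0 le_rfl
    rw [zero_mul, add_zero] at h0
    set l : ℝ := (Cy - (c y - c x) + 1) / (p y - p x) with hl_def
    have hl0 : 0 ≤ l := div_nonneg (by linarith) (le_of_lt hd)
    have := hcb l hl0
    rw [hl_def, div_mul_cancel₀ _ (ne_of_gt hd)] at this
    linarith
end
end

section
/- Let {f_t : t ∈ T} ⊂ Γ₀(X) be a nonempty family, f := sup_{t∈T} f_t, and x ∈ dom f. Assume the standard hypothesis (SH) holds and let 0 < ρ_t ≤ 1, t ∈ T, satisfy inf_{t∈T} ρ_t f_t(x) > −∞. Then ∂f(x) ⊂ ⋂_{ε>0} co‾( (⋃_{t∈T(x)} ∂_ε f_t(x)) ∪ (⋃_{t∈T\T(x)} ε·∂_ε(ρ_t f_t)(x)) ), where (ρ_t f_t)(z) := ρ_t f_t(z) and ε·S := {ε s : s ∈ S}. -/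
open Set Pointwise Topology
open scoped Classical

noncomputable section

variable {X : Type*} [AddCommGroup X] [Module ℝ X] [TopologicalSpace X]
  [IsTopologicalAddGroup X] [ContinuousSMul ℝ X] [LocallyConvexSpace ℝ X] [T2Space X]

lemma ereal_cases (e : EReal) : e = ⊥ ∨ e = ⊤ ∨ ∃ b : ℝ, e = (b : EReal) := by
  by_cases h1 : e = ⊥
  · exact Or.inl h1
  by_cases h2 : e = ⊤
  · exact Or.inr (Or.inl h2)
  · exact Or.inr (Or.inr ⟨e.toReal, (EReal.coe_toReal h2 h1).symm⟩)

lemma ereal_combo {u v : EReal} {A B a b : ℝ} (hu : u ≤ (A : EReal)) (hv : v ≤ (B : EReal))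
    (ha : 0 ≤ a) (hb : 0 ≤ b) :
    (a : EReal) * u + (b : EReal) * v ≤ ((a * A + b * B : ℝ) : EReal) := by
  have h1 : (a : EReal) * u ≤ (a : EReal) * A :=
    mul_le_mul_of_nonneg_left hu (by exact_mod_cast ha)
  have h2 : (b : EReal) * v ≤ (b : EReal) * B :=
    mul_le_mul_of_nonneg_left hv (by exact_mod_cast hb)
  calc (a : EReal) * u + (b : EReal) * v ≤ (a : EReal) * A + (b : EReal) * B := add_le_add h1 h2
    _ = ((a * A + b * B : ℝ) : EReal) := by
        rw [← EReal.coe_mul, ← EReal.coe_mul, ← EReal.coe_add]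

lemma epi_convex' {h : X → EReal} (hc : EConvexOn' h) :
    Convex ℝ {z : X × ℝ | h z.1 ≤ (z.2 : EReal)} := by
  rintro ⟨y1, m1⟩ h1 ⟨y2, m2⟩ h2 a b ha hb hab
  simp only [Set.mem_setOf_eq] at h1 h2 ⊢
  have hmain := hc y1 y2 a b ha hb hab
  have : (a • (y1, m1) + b • (y2, m2) : X × ℝ) = (a • y1 + b • y2, a * m1 + b * m2) := by
    simp [Prod.ext_iff, smul_eq_mul]
  rw [this]
  exact le_trans hmain (ereal_combo h1 h2 ha hb)

lemma epi_closed' {h : X → EReal} (hlsc : LowerSemicontinuous h) :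
    IsClosed {z : X × ℝ | h z.1 ≤ (z.2 : EReal)} := by
  rw [← isOpen_compl_iff]
  have hcompl : {z : X × ℝ | h z.1 ≤ (z.2 : EReal)}ᶜ = {z : X × ℝ | (z.2 : EReal) < h z.1} := by
    ext z; simp [not_le]
  rw [hcompl, isOpen_iff_mem_nhds]
  rintro ⟨y, μ⟩ hz
  simp only [Set.mem_setOf_eq] at hz
  obtain ⟨c', hc1, hc2⟩ := exists_between hz
  obtain ⟨c, rfl⟩ : ∃ c : ℝ, c' = (c : EReal) := by
    rcases ereal_cases c' with h1 | h1 | ⟨c, hcc⟩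
    · exact absurd (h1 ▸ hc1) (by simp)
    · exact absurd (h1 ▸ hc2) (by simp)
    · exact ⟨c, hcc⟩
  have h1 : ∀ᶠ y' in 𝓝 y, (c : EReal) < h y' := hlsc y _ hc2
  have h2 : Iio c ∈ 𝓝 μ := Iio_mem_nhds (by exact_mod_cast hc1)
  rw [nhds_prod_eq]
  refine Filter.mem_of_superset (Filter.prod_mem_prod h1 h2) ?_
  rintro ⟨y', μ'⟩ ⟨ha', hb'⟩
  simp only [Set.mem_setOf_eq]
  exact lt_trans (by exact_mod_cast hb') ha'

lemma sMul_apply_ne_bot {f : X → EReal} {ρ : ℝ} (hρ : 0 < ρ) (hb : ∀ y, f y ≠ ⊥) (y : X) :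
    sMul ρ f y ≠ ⊥ := by
  unfold sMul
  split_ifs with h
  · simp
  · rcases ereal_cases (f y) with h1 | h1 | ⟨b, h1⟩
    · exact absurd h1 (hb y)
    · exact absurd h1 h
    · rw [h1, ← EReal.coe_mul]; exact EReal.coe_ne_bot _

lemma sMul_apply_ne_top {f : X → EReal} {ρ : ℝ} {y : X} (ht : f y ≠ ⊤) (hb : f y ≠ ⊥) :
    sMul ρ f y ≠ ⊤ := by
  unfold sMul; rw [if_neg ht]
  obtain ⟨b, h1⟩ : ∃ b : ℝ, f y = (b : EReal) := ⟨_, (EReal.coe_toReal ht hb).symm⟩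
  rw [h1, ← EReal.coe_mul]; exact EReal.coe_ne_top _

lemma sMul_apply_top {f : X → EReal} {ρ : ℝ} {y : X} (ht : f y = ⊤) : sMul ρ f y = ⊤ := if_pos ht

lemma sMul_le_coe_iff {f : X → EReal} {ρ : ℝ} (hρ : 0 < ρ) (y : X) (μ : ℝ) :
    sMul ρ f y ≤ (μ : EReal) ↔ f y ≤ ((μ / ρ : ℝ) : EReal) := by
  unfold sMul
  rcases ereal_cases (f y) with h1 | h1 | ⟨b, h1⟩
  · rw [h1, if_neg (by simp : (⊥ : EReal) ≠ ⊤), EReal.coe_mul_bot_of_pos hρ]; simp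
  · rw [h1]; simp
  · rw [h1, if_neg (EReal.coe_ne_top b), ← EReal.coe_mul, EReal.coe_le_coe_iff,
      EReal.coe_le_coe_iff]
    constructor
    · intro hh; rw [le_div_iff₀ hρ]; nlinarith
    · intro hh; rw [le_div_iff₀ hρ] at hh; nlinarith

lemma sMul_epi_eq {f : X → EReal} {ρ : ℝ} (hρ : 0 < ρ) :
    {z : X × ℝ | sMul ρ f z.1 ≤ (z.2 : EReal)} =
      (fun z : X × ℝ => (z.1, z.2 / ρ)) ⁻¹' {z : X × ℝ | f z.1 ≤ (z.2 : EReal)} := by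
  ext z; exact sMul_le_coe_iff hρ z.1 z.2

lemma sMul_epi_closed {f : X → EReal} {ρ : ℝ} (hρ : 0 < ρ)
    (h : IsClosed {z : X × ℝ | f z.1 ≤ (z.2 : EReal)}) :
    IsClosed {z : X × ℝ | sMul ρ f z.1 ≤ (z.2 : EReal)} := by
  rw [sMul_epi_eq hρ]
  exact h.preimage (by continuity)

lemma sMul_epi_convex {f : X → EReal} {ρ : ℝ} (hρ : 0 < ρ)
    (h : Convex ℝ {z : X × ℝ | f z.1 ≤ (z.2 : EReal)}) :
    Convex ℝ {z : X × ℝ | sMul ρ f z.1 ≤ (z.2 : EReal)} := by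
  rw [sMul_epi_eq hρ]
  have hlin : IsLinearMap ℝ (fun z : X × ℝ => (z.1, z.2 / ρ)) := by
    constructor
    · intro a b; simp [Prod.ext_iff]; ring
    · intro c a; simp [Prod.ext_iff, smul_eq_mul]; ring
  exact h.is_linear_preimage hlin

instance : LocallyConvexSpace ℝ (WeakDual ℝ X) := WeakBilin.locallyConvexSpace

lemma dual_repr (φ : WeakDual ℝ X →L[ℝ] ℝ) :
    ∃ g : X, ∀ q : WeakDual ℝ X, φ q = q g := by
  classical
  have hind : IsInducing (fun (q : WeakDual ℝ X) (y : X) => q y) := ⟨rfl⟩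
  have h1 : φ ⁻¹' Set.Ioo (-1 : ℝ) 1 ∈ 𝓝 (0 : WeakDual ℝ X) := by
    apply φ.continuous.continuousAt.preimage_mem_nhds
    rw [map_zero]
    exact Ioo_mem_nhds (by norm_num) (by norm_num)
  rw [hind.nhds_eq_comap, Filter.mem_comap] at h1
  obtain ⟨U, hU, hUsub⟩ := h1
  rw [nhds_pi, Filter.mem_pi] at hU
  obtain ⟨I, hIfin, V, hV, hVsub⟩ := hU
  have hker : ∀ q : WeakDual ℝ X, (∀ y ∈ I, q y = 0) → φ q = 0 := by
    intro q hq
    by_contra hne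
    have hmem : ∀ c : ℝ, (c • q) ∈ φ ⁻¹' Set.Ioo (-1 : ℝ) 1 := by
      intro c
      apply hUsub
      apply hVsub
      intro y hy
      have hz : (c • q) y = 0 := by
        show c * q y = 0
        rw [hq y hy, mul_zero]
      show (c • q) y ∈ V y
      rw [hz]
      exact mem_of_mem_nhds (hV y)
    have h2 := (hmem (2 / φ q)).2
    have h1' := (hmem (2 / φ q)).1
    rw [map_smul, smul_eq_mul, div_mul_cancel₀ _ hne] at h2
    norm_num at h2
  have : Finite ↥I := hIfin.to_subtype
  have : Fintype ↥I := Fintype.ofFinite ↥I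
  let L : ↥I → (WeakDual ℝ X) →ₗ[ℝ] ℝ := fun y =>
    { toFun := fun q => q (y : X), map_add' := fun q q' => rfl, map_smul' := fun c q => rfl }
  let K : (WeakDual ℝ X) →ₗ[ℝ] ℝ :=
    { toFun := fun q => φ q, map_add' := fun q q' => by simp, map_smul' := fun c q => by simp }
  have hker' : (⨅ i, LinearMap.ker (L i)) ≤ LinearMap.ker K := by
    intro q hq
    rw [Submodule.mem_iInf] at hq
    rw [LinearMap.mem_ker]
    exact hker q fun y hy => hq ⟨y, hy⟩
  have hspan := mem_span_of_iInf_ker_le_ker (𝕜 := ℝ) hker'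
  obtain ⟨c, hc⟩ := (Submodule.mem_span_range_iff_exists_fun ℝ).1 hspan
  refine ⟨∑ i, c i • (i : X), fun q => ?_⟩
  have h3 := congrArg (fun (L' : (WeakDual ℝ X) →ₗ[ℝ] ℝ) => L' q) hc
  simp only [LinearMap.coe_sum, Finset.sum_apply, LinearMap.smul_apply, smul_eq_mul] at h3
  rw [map_sum]
  simp only [map_smul, smul_eq_mul]
  exact h3.symm

set_option maxHeartbeats 1000000 in
lemma exists_esubdiff_aux {h : X → EReal} (hbot : ∀ y, h y ≠ ⊥)
    (hepiC : IsClosed {z : X × ℝ | h z.1 ≤ (z.2 : EReal)})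
    (hepiV : Convex ℝ {z : X × ℝ | h z.1 ≤ (z.2 : EReal)})
    {x : X} (hxt : h x ≠ ⊤) {ε η : ℝ} (hε : 0 < ε) (hη : 0 < η) (g : X) (r : ℝ)
    (hray : ∀ l : ℝ, 0 < l → h x + ((l * r - ε : ℝ) : EReal) ≤ h (x + l • g)) :
    ∃ q : WeakDual ℝ X, q ∈ esubdiff h x ε ∧ r - η < q g := by
  obtain ⟨a, ha⟩ : ∃ a : ℝ, h x = (a : EReal) := ⟨_, (EReal.coe_toReal hxt (hbot x)).symm⟩
  set E := {z : X × ℝ | h z.1 ≤ (z.2 : EReal)} with hE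
  set lam : ℝ := 2 * ε / η with hlamdef
  have hlampos : 0 < lam := by positivity
  have hlam_eq : lam * η = 2 * ε := by
    rw [hlamdef]; field_simp
  set P : X × ℝ := (x, a - ε) with hPdef
  set Q : X × ℝ := (x + lam • g, (a - ε) + lam * (r - η / 2)) with hQdef
  have hseg_comp : IsCompact (segment ℝ P Q) := by
    rw [segment_eq_image]
    exact isCompact_Icc.image (by continuity)
  have hdisj : Disjoint (segment ℝ P Q) E := by
    rw [Set.disjoint_left]
    intro z hz hzE
    rw [segment_eq_image] at hz
    obtain ⟨θ, hθ, rfl⟩ := hz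
    have hzE' : ((1 - θ) • P + θ • Q : X × ℝ) ∈ E := hzE
    have hzl : ((1 - θ) • P + θ • Q : X × ℝ)
        = (x + (θ * lam) • g, (a - ε) + (θ * lam) * (r - η / 2)) := by
      rw [hPdef, hQdef, Prod.ext_iff]
      constructor
      · show (1 - θ) • x + θ • (x + lam • g) = x + (θ * lam) • g
        rw [smul_add, smul_smul]
        module
      · show (1 - θ) * (a - ε) + θ * ((a - ε) + lam * (r - η / 2))
            = (a - ε) + (θ * lam) * (r - η / 2)
        ring
    rw [hzl] at hzE'
    simp only [hE, Set.mem_setOf_eq] at hzE'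
    have hlnn : 0 ≤ θ * lam := mul_nonneg hθ.1 hlampos.le
    rcases eq_or_lt_of_le hlnn with h0 | hpos
    · rw [← h0, zero_smul, add_zero, zero_mul, add_zero, ha, EReal.coe_le_coe_iff] at hzE'
      linarith
    · have hr := hray (θ * lam) hpos
      rw [ha, ← EReal.coe_add] at hr
      have h2 := le_trans hr hzE'
      rw [EReal.coe_le_coe_iff] at h2
      nlinarith
  obtain ⟨Φ, u, v, hLu, huv, hEv⟩ :=
    geometric_hahn_banach_compact_closed (convex_segment P Q) hseg_comp hepiV hepiC hdisj
  set s : ℝ := Φ (0, 1) with hsdef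
  have hΦ : ∀ (y : X) (μ : ℝ), Φ (y, μ) = Φ (y, 0) + μ * s := by
    intro y μ
    have hyμ : ((y, μ) : X × ℝ) = (y, 0) + μ • ((0 : X), (1 : ℝ)) := by
      simp [Prod.ext_iff]
    rw [hyμ, map_add, map_smul, smul_eq_mul, hsdef]
  have hmemE : ∀ (y : X) (b : ℝ), h y ≤ (b : EReal) → v < Φ (y, 0) + b * s := by
    intro y b hb
    have hmem : ((y, b) : X × ℝ) ∈ E := hb
    have := hEv (y, b) hmem
    rwa [hΦ] at this
  have hxE : h x ≤ ((a : ℝ) : EReal) := le_of_eq ha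
  have hsnn : 0 ≤ s := by
    by_contra hs
    push_neg at hs
    set b := max a ((v - Φ (x, 0)) / s) with hbdef
    have h1 : v < Φ (x, 0) + b * s :=
      hmemE x b (le_trans hxE (by exact_mod_cast le_max_left _ _))
    have h2 : b * s ≤ v - Φ (x, 0) := by
      have hble : (v - Φ (x, 0)) / s ≤ b := le_max_right _ _
      calc b * s ≤ ((v - Φ (x, 0)) / s) * s := by nlinarith
        _ = v - Φ (x, 0) := div_mul_cancel₀ _ (ne_of_lt hs)
    linarith
  have hPu : Φ (x, 0) + (a - ε) * s < u := by
    have := hLu P (left_mem_segment ℝ P Q); rwa [hPdef, hΦ] at this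
  have hsne : s ≠ 0 := by
    intro h0
    have h1 : v < Φ (x, 0) + a * s := hmemE x a hxE
    rw [h0] at h1 hPu
    simp only [mul_zero, add_zero] at h1 hPu
    linarith
  have hspos : 0 < s := lt_of_le_of_ne hsnn (Ne.symm hsne)
  set q : X →L[ℝ] ℝ := (-(s⁻¹)) • (Φ.comp (ContinuousLinearMap.inl ℝ X ℝ)) with hqdef
  have hqapp : ∀ y : X, q y = -(Φ (y, 0)) / s := by
    intro y
    rw [hqdef, ContinuousLinearMap.smul_apply, ContinuousLinearMap.comp_apply,
      ContinuousLinearMap.inl_apply, smul_eq_mul]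
    rw [div_eq_inv_mul]; ring
  have hkey : ∀ y : X, ((v / s + q y : ℝ) : EReal) ≤ h y := by
    intro y
    rcases ereal_cases (h y) with hb | ht | ⟨b, hby⟩
    · exact absurd hb (hbot y)
    · rw [ht]; exact le_top
    · rw [hby, EReal.coe_le_coe_iff]
      have h1 := hmemE y b (le_of_eq hby)
      rw [hqapp]
      have heq : v / s + -(Φ (y, 0)) / s = (v - Φ (y, 0)) / s := by ring
      rw [heq, div_le_iff₀ hspos]
      linarith
  have hvs_gt : a - ε < v / s + q x := by
    rw [hqapp]
    have heq : v / s + -(Φ (x, 0)) / s = (v - Φ (x, 0)) / s := by ring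
    rw [heq, lt_div_iff₀ hspos]
    nlinarith
  have hfinal : ∀ y : X, h x + ((q y - q x - ε : ℝ) : EReal) ≤ h y := by
    intro y
    rw [ha, ← EReal.coe_add]
    refine le_trans ?_ (hkey y)
    rw [EReal.coe_le_coe_iff]
    linarith
  have hQu : Φ (x + lam • g, 0) + ((a - ε) + lam * (r - η / 2)) * s < u := by
    have := hLu Q (right_mem_segment ℝ P Q); rwa [hQdef, hΦ] at this
  have hlinQ : Φ (x + lam • g, 0) = Φ (x, 0) + lam * Φ (g, 0) := by
    have heq : ((x + lam • g, (0 : ℝ)) : X × ℝ) = (x, 0) + lam • (g, 0) := by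
      simp [Prod.ext_iff]
    rw [heq, map_add, map_smul, smul_eq_mul]
  have hqg : r - η < q g := by
    have h2' : v < Φ (x, 0) + a * s := hmemE x a hxE
    rw [hlinQ] at hQu
    have h3 : lam * Φ (g, 0) < (ε - lam * (r - η / 2)) * s := by nlinarith
    have h5 : (ε - lam * (r - η / 2)) * s = -(lam * (r - η)) * s := by
      linear_combination (-(s / 2)) * hlam_eq
    rw [h5] at h3
    rw [hqapp, lt_div_iff₀ hspos]
    nlinarith
  exact ⟨q, ⟨hε.le, hxt, hbot x, hfinal⟩, hqg⟩

set_option maxHeartbeats 2000000 in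
/-- Theorem `t1`, inclusion: under (SH), with `0 < ρ_t ≤ 1` and
`inf_t ρ_t f_t(x) > −∞`,
`∂f(x) ⊂ ⋂_{ε>0} co‾((⋃_{t∈T(x)} ∂_ε f_t(x)) ∪ (⋃_{t∉T(x)} ε·∂_ε(ρ_t f_t)(x)))`. -/
theorem statement14 {T : Type*} [TopologicalSpace T] [CompactSpace T] [T2Space T] [Nonempty T]
    (f : T → X → EReal) (hf : ∀ t, Gamma0 (f t))
    (husc : ∀ z : X, UpperSemicontinuous fun t => f t z)
    (x : X) (hx : x ∈ edom (fun z => ⨆ t, f t z))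
    (ρ : T → ℝ) (hρ : ∀ t, 0 < ρ t ∧ ρ t ≤ 1)
    (hinf : (⊥ : EReal) < ⨅ t, sMul (ρ t) (f t) x) :
    esubdiff (fun z => ⨆ t, f t z) x 0 ⊆
      ⋂ (ε : ℝ) (_ : 0 < ε), cclo
        ((⋃ t ∈ {t : T | (⨆ s, f s x) ≤ f t x}, esubdiff (f t) x ε) ∪
         (⋃ t ∈ {t : T | (⨆ s, f s x) ≤ f t x}ᶜ,
            ε • esubdiff (sMul (ρ t) (f t)) x ε)) := by
  intro p hp
  obtain ⟨-, hFt, hFb, hsub⟩ := hp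
  obtain ⟨Fx, hFx⟩ : ∃ a : ℝ, (⨆ t, f t x) = (a : EReal) :=
    ⟨_, (EReal.coe_toReal hFt hFb).symm⟩
  simp only [Set.mem_iInter]
  intro ε hε
  by_contra hns
  set S : Set (WeakDual ℝ X) :=
    ((⋃ t ∈ {t : T | (⨆ s, f s x) ≤ f t x}, esubdiff (f t) x ε) ∪
     (⋃ t ∈ {t : T | (⨆ s, f s x) ≤ f t x}ᶜ,
        ε • esubdiff (sMul (ρ t) (f t)) x ε)) with hSdef
  have hcclV : Convex ℝ (cclo S) := by
    unfold cclo; exact (convex_convexHull ℝ _).closure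
  have hcclC : IsClosed (cclo S) := by unfold cclo; exact isClosed_closure
  obtain ⟨φ, u, hu1, hu2⟩ := geometric_hahn_banach_closed_point hcclV hcclC hns
  obtain ⟨g, hg⟩ := dual_repr φ
  rw [hg] at hu2
  have hSu : ∀ q : WeakDual ℝ X, q ∈ S → q g < u := by
    intro q hq
    rw [← hg q]
    exact hu1 q (subset_closure (subset_convexHull ℝ _ hq))
  have claim : ∀ t : T, ∃ W : Set T, IsOpen W ∧ t ∈ W ∧ ∃ lam γ : ℝ, 0 < lam ∧ 0 < γ ∧
      ∀ s, s ∈ W → ∀ l : ℝ, 0 < l → l ≤ lam →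
        f s (x + l • g) ≤ ((Fx + l * p g - l * γ : ℝ) : EReal) := by
    intro t
    obtain ⟨hbot_t, -, hconv_t, hlsc_t⟩ := hf t
    by_cases hact : (⨆ s, f s x) ≤ f t x
    · -- active index
      have hftx : f t x = (Fx : EReal) :=
        le_antisymm (hFx ▸ le_iSup (fun s => f s x) t) (hFx ▸ hact)
      have step1 : ∃ l0 : ℝ, 0 < l0 ∧
          f t (x + l0 • g) < ((Fx + l0 * p g - ε : ℝ) : EReal) := by
        by_contra hcon
        push_neg at hcon
        have hray : ∀ l : ℝ, 0 < l →
            f t x + ((l * p g - ε : ℝ) : EReal) ≤ f t (x + l • g) := by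
          intro l hl
          have h1 := hcon l hl
          rw [hftx, ← EReal.coe_add]
          convert h1 using 2
          ring
        obtain ⟨q, hq, hqg⟩ := exists_esubdiff_aux hbot_t (epi_closed' hlsc_t)
          (epi_convex' hconv_t) (by rw [hftx]; exact EReal.coe_ne_top Fx) hε
          (by linarith : (0:ℝ) < p g - u) g (p g) hray
        have hqS : q ∈ S := by
          rw [hSdef]
          exact Or.inl (Set.mem_iUnion₂.2 ⟨t, hact, hq⟩)
        have hlt := hSu q hqS
        rw [show p g - (p g - u) = u by ring] at hqg
        linarith
      obtain ⟨l0, hl0, hlt⟩ := step1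
      refine ⟨{s : T | f s (x + l0 • g) < ((Fx + l0 * p g - ε : ℝ) : EReal)},
        (upperSemicontinuous_iff_isOpen_preimage.1 (husc (x + l0 • g))) _, hlt,
        l0, ε / l0, hl0, by positivity, ?_⟩
      intro s hs l hl hll
      obtain ⟨hbot_s, -, hconv_s, -⟩ := hf s
      have hdiv1 : 0 ≤ 1 - l / l0 := by
        rw [sub_nonneg]; exact (div_le_one hl0).2 hll
      have hdiv2 : (0:ℝ) ≤ l / l0 := by positivity
      have hcvx := hconv_s x (x + l0 • g) (1 - l / l0) (l / l0) hdiv1 hdiv2 (by ring)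
      have hpt : ((1 - l / l0) • x + (l / l0) • (x + l0 • g)) = x + l • g := by
        rw [smul_add, smul_smul, div_mul_cancel₀ l (ne_of_gt hl0)]
        module
      rw [hpt] at hcvx
      refine le_trans hcvx (le_trans
        (ereal_combo (hFx ▸ le_iSup (fun s => f s x) s) (le_of_lt hs) hdiv1 hdiv2) ?_)
      rw [EReal.coe_le_coe_iff]
      have heq : (1 - l / l0) * Fx + l / l0 * (Fx + l0 * p g - ε)
          = Fx + l * p g - l * (ε / l0) := by
        field_simp
        ring
      rw [heq]
    · -- inactive index
      have hact' : t ∈ {t : T | (⨆ s, f s x) ≤ f t x}ᶜ := hact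
      push_neg at hact
      have hftx_lt : f t x < (Fx : EReal) := hFx ▸ hact
      obtain ⟨bt, hbt⟩ : ∃ b : ℝ, f t x = (b : EReal) :=
        ⟨_, (EReal.coe_toReal (ne_top_of_lt hftx_lt) (hbot_t x)).symm⟩
      have hbtlt : bt < Fx := by
        rw [hbt] at hftx_lt; exact_mod_cast hftx_lt
      have step1 : ∃ l0 : ℝ, 0 < l0 ∧ f t (x + l0 • g) ≠ ⊤ := by
        by_contra hcon
        push_neg at hcon
        have hray : ∀ l : ℝ, 0 < l →
            sMul (ρ t) (f t) x + ((l * (u / ε + 1) - ε : ℝ) : EReal)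
              ≤ sMul (ρ t) (f t) (x + l • g) := by
          intro l hl
          rw [sMul_apply_top (hcon l hl)]
          exact le_top
        obtain ⟨q, hq, hqg⟩ := exists_esubdiff_aux
          (sMul_apply_ne_bot (hρ t).1 hbot_t)
          (sMul_epi_closed (hρ t).1 (epi_closed' hlsc_t))
          (sMul_epi_convex (hρ t).1 (epi_convex' hconv_t))
          (sMul_apply_ne_top (ne_top_of_lt hftx_lt) (hbot_t x)) hε one_pos g (u / ε + 1) hray
        have hqS : (ε • q) ∈ S := by
          rw [hSdef]
          exact Or.inr (Set.mem_iUnion₂.2 ⟨t, hact', Set.smul_mem_smul_set hq⟩)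
        have hlt := hSu _ hqS
        have happ : (ε • q) g = ε * q g := rfl
        rw [happ] at hlt
        rw [show u / ε + 1 - 1 = u / ε by ring] at hqg
        have : u < q g * ε := (div_lt_iff₀ hε).1 hqg
        nlinarith
      obtain ⟨l0, hl0, hne⟩ := step1
      obtain ⟨B, hB⟩ : ∃ b : ℝ, f t (x + l0 • g) = (b : EReal) :=
        ⟨_, (EReal.coe_toReal hne (hbot_t _)).symm⟩
      set aa : ℝ := (bt + Fx) / 2 with haa
      set C : ℝ := (B + 1 - aa) / l0 - p g + 1 with hC
      have hFxaa : 0 < Fx - aa := by rw [haa]; linarith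
      have hmaxC : (0:ℝ) < max C 1 := lt_of_lt_of_le one_pos (le_max_right C 1)
      refine ⟨{s : T | f s (x + l0 • g) < ((B + 1 : ℝ) : EReal)} ∩
          {s : T | f s x < ((aa : ℝ) : EReal)},
        IsOpen.inter ((upperSemicontinuous_iff_isOpen_preimage.1 (husc (x + l0 • g))) _)
          ((upperSemicontinuous_iff_isOpen_preimage.1 (husc x)) _),
        ⟨by rw [Set.mem_setOf_eq, hB]; exact_mod_cast (by linarith : B < B + 1),
         by rw [Set.mem_setOf_eq, hbt]; exact_mod_cast (by rw [haa]; linarith : bt < aa)⟩,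
        min l0 ((Fx - aa) / max C 1), 1,
        lt_min hl0 (div_pos hFxaa hmaxC), one_pos, ?_⟩
      intro s hs l hl hll
      obtain ⟨hs1, hs2⟩ := hs
      obtain ⟨hbot_s, -, hconv_s, -⟩ := hf s
      have hll0 : l ≤ l0 := le_trans hll (min_le_left _ _)
      have hdiv1 : 0 ≤ 1 - l / l0 := by
        rw [sub_nonneg]; exact (div_le_one hl0).2 hll0
      have hdiv2 : (0:ℝ) ≤ l / l0 := by positivity
      have hcvx := hconv_s x (x + l0 • g) (1 - l / l0) (l / l0) hdiv1 hdiv2 (by ring)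
      have hpt : ((1 - l / l0) • x + (l / l0) • (x + l0 • g)) = x + l • g := by
        rw [smul_add, smul_smul, div_mul_cancel₀ l (ne_of_gt hl0)]
        module
      rw [hpt] at hcvx
      refine le_trans hcvx (le_trans
        (ereal_combo (le_of_lt hs2) (le_of_lt hs1) hdiv1 hdiv2) ?_)
      rw [EReal.coe_le_coe_iff]
      have h1 : l * C ≤ Fx - aa := by
        have hlmax : l ≤ (Fx - aa) / max C 1 := le_trans hll (min_le_right _ _)
        calc l * C ≤ l * max C 1 := by nlinarith [le_max_left C 1]
          _ ≤ ((Fx - aa) / max C 1) * max C 1 := by nlinarith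
          _ = Fx - aa := div_mul_cancel₀ _ (ne_of_gt hmaxC)
      have h2 : (1 - l / l0) * aa + l / l0 * (B + 1) = aa + l * (C + p g - 1) := by
        rw [hC]
        field_simp
        ring
      rw [h2]
      linarith
  choose W hWopen hWmem lam gam hlam hgam hbound using claim
  obtain ⟨I, hIcov⟩ := isCompact_univ.elim_finite_subcover W hWopen
    (fun t _ => Set.mem_iUnion.2 ⟨t, hWmem t⟩)
  have hInon : I.Nonempty := by
    have := hIcov (Set.mem_univ (Classical.arbitrary T))
    rw [Set.mem_iUnion₂] at this
    obtain ⟨i, hi, -⟩ := this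
    exact ⟨i, hi⟩
  set l1 : ℝ := I.inf' hInon lam with hl1
  set g1 : ℝ := I.inf' hInon gam with hg1
  have hl1pos : 0 < l1 := (Finset.lt_inf'_iff hInon).2 fun i _ => hlam i
  have hg1pos : 0 < g1 := (Finset.lt_inf'_iff hInon).2 fun i _ => hgam i
  have hball : ∀ s : T, f s (x + l1 • g) ≤ ((Fx + l1 * p g - l1 * g1 : ℝ) : EReal) := by
    intro s
    have hscov := hIcov (Set.mem_univ s)
    rw [Set.mem_iUnion₂] at hscov
    obtain ⟨i, hiI, hsW⟩ := hscov
    have hb := hbound i s hsW l1 hl1pos (Finset.inf'_le lam hiI)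
    refine le_trans hb ?_
    rw [EReal.coe_le_coe_iff]
    have hgi : g1 ≤ gam i := Finset.inf'_le gam hiI
    nlinarith
  have hsup : (⨆ s, f s (x + l1 • g)) ≤ ((Fx + l1 * p g - l1 * g1 : ℝ) : EReal) :=
    iSup_le hball
  have hlow : (⨆ t, f t x) + ((p (x + l1 • g) - p x - 0 : ℝ) : EReal)
      ≤ ⨆ t, f t (x + l1 • g) := hsub (x + l1 • g)
  rw [hFx] at hlow
  have hpl : p (x + l1 • g) - p x - 0 = l1 * p g := by
    have hmap : p (x + l1 • g) = p x + l1 * p g := by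
      rw [map_add, map_smul, smul_eq_mul]
    rw [hmap]; ring
  rw [hpl, ← EReal.coe_add] at hlow
  have hcontr := le_trans hlow hsup
  rw [EReal.coe_le_coe_iff] at hcontr
  nlinarith
end
end
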